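/- lim_{k→∞} k^{5/2}·θ(k) = 3/(2√π); in other words θ(k) is asymptotically equivalent to (3/(2√π))·k^{−5/2} as k → ∞. -/

import Mathlib

open Real Filter Stirling Nat

/-- The critical offspring distribution: θ(k) = 3·(2k−1)!! / (2^{k+1}·(k+2)!),
with (2k−1)!! read as 1 when k = 0 (natural subtraction gives 0!! = 1). -/
noncomputable def theta (k : ℕ) : ℝ :=
  3 * (Nat.doubleFactorial (2 * k - 1) : ℝ) / (2 ^ (k + 1) * (Nat.factorial (k + 2) : ℝ))

lemma fact_two_mul (k : ℕ) (hk : 1 ≤ k) :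
    (2 * k)! = 2 ^ k * k ! * (2 * k - 1)‼ := by
  have h : 2 * k - 1 + 1 = 2 * k := by omega
  have := Nat.factorial_eq_mul_doubleFactorial (2 * k - 1)
  rw [h] at this
  rw [this, Nat.doubleFactorial_two_mul]

lemma key (k : ℕ) (hk : 1 ≤ k) :
    (k : ℝ) ^ (5 / 2 : ℝ) * theta k
      = 3 / 2 * (stirlingSeq (2 * k) / (stirlingSeq k) ^ 2)
        * ((k : ℝ) ^ 2 / (((k : ℝ) + 1) * ((k : ℝ) + 2))) := by
  have hx : (0 : ℝ) < (k : ℝ) := by exact_mod_cast hk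
  have hdf : ((2 * k - 1)‼ : ℝ) = ((2 * k)! : ℝ) / (2 ^ k * (k ! : ℝ)) := by
    rw [fact_two_mul k hk]
    push_cast
    field_simp
  have hfac2 : ((k + 2)! : ℝ) = ((k : ℝ) + 2) * (((k : ℝ) + 1) * (k ! : ℝ)) := by
    push_cast [Nat.factorial_succ]
    ring
  have hrpow : (k : ℝ) ^ (5 / 2 : ℝ) = (k : ℝ) ^ 2 * Real.sqrt k := by
    rw [Real.sqrt_eq_rpow, ← Real.rpow_natCast (k : ℝ) 2, ← Real.rpow_add hx]
    norm_num
  have hs2 : Real.sqrt (2 * (2 * k : ℕ) : ℝ) = 2 * Real.sqrt k := by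
    push_cast
    rw [show (2 : ℝ) * (2 * k) = 4 * k by ring, Real.sqrt_mul (by norm_num) (k : ℝ),
      show (4 : ℝ) = 2 ^ 2 by norm_num, Real.sqrt_sq (by norm_num)]
  have hsk : Real.sqrt (2 * k : ℝ) = Real.sqrt 2 * Real.sqrt k := Real.sqrt_mul (by norm_num) _
  have hpow : (((2 * k : ℕ) : ℝ) / Real.exp 1) ^ (2 * k)
      = 4 ^ k * (((k : ℝ) / Real.exp 1) ^ k) ^ 2 := by
    rw [show ((2 * k : ℕ) : ℝ) / Real.exp 1 = 2 * ((k : ℝ) / Real.exp 1) by push_cast; ring,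
      mul_pow, pow_mul' ((k : ℝ) / Real.exp 1) 2 k, pow_mul 2 2 k]
    norm_num
  have hsqk : Real.sqrt (k : ℝ) ≠ 0 := by positivity
  have hfk : (k ! : ℝ) ≠ 0 := by positivity
  have hek : ((k : ℝ) / Real.exp 1) ^ k ≠ 0 := by positivity
  rw [theta, hdf, hfac2, hrpow, stirlingSeq, stirlingSeq, hs2, hsk, hpow]
  push_cast
  have hsq2 : Real.sqrt 2 ^ 2 = 2 := Real.sq_sqrt (by norm_num)
  field_simp
  ring_nf
  rw [hsq2, show (2 : ℝ) ^ (k * 2) = 4 ^ k by rw [pow_mul']; norm_num]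
  ring

/-- θ(k) ~ (3/(2√π))·k^{−5/2} as k → ∞, i.e. k^{5/2}·θ(k) → 3/(2√π). -/
theorem theta_asymptotics :
    Filter.Tendsto (fun k : ℕ => (k : ℝ) ^ (5 / 2 : ℝ) * theta k) Filter.atTop
      (nhds (3 / (2 * Real.sqrt Real.pi))) := by
  have h1 : Tendsto (fun k : ℕ => stirlingSeq (2 * k)) atTop (nhds (Real.sqrt π)) :=
    tendsto_stirlingSeq_sqrt_pi.comp (tendsto_atTop_atTop_of_monotone
      (fun a b hab => by omega) (fun b => ⟨b, by omega⟩))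
  have h2 : Tendsto (fun k : ℕ => (stirlingSeq k) ^ 2) atTop (nhds π) := by
    have := (tendsto_stirlingSeq_sqrt_pi.pow 2)
    rwa [Real.sq_sqrt Real.pi_nonneg] at this
  have hπ : Real.sqrt π ≠ 0 := by positivity
  have h3 : Tendsto (fun k : ℕ => stirlingSeq (2 * k) / (stirlingSeq k) ^ 2) atTop
      (nhds (Real.sqrt π / π)) := h1.div h2 (by positivity)
  have h4 : Tendsto (fun k : ℕ => ((k : ℝ) ^ 2 / (((k : ℝ) + 1) * ((k : ℝ) + 2)))) atTop
      (nhds 1) := by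
    have : (fun k : ℕ => ((k : ℝ) ^ 2 / (((k : ℝ) + 1) * ((k : ℝ) + 2))))
        =ᶠ[atTop] fun k : ℕ => (1 / ((1 + 1 / (k : ℝ)) * (1 + 2 / (k : ℝ)))) := by
      filter_upwards [eventually_gt_atTop 0] with k hk
      have hx : (0 : ℝ) < (k : ℝ) := by exact_mod_cast hk
      field_simp
    rw [tendsto_congr' this]
    have hk1 : Tendsto (fun k : ℕ => 1 / (k : ℝ)) atTop (nhds 0) :=
      tendsto_one_div_atTop_nhds_zero_nat
    have hk2 : Tendsto (fun k : ℕ => 2 / (k : ℝ)) atTop (nhds 0) := by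
      simpa [div_eq_mul_inv] using hk1.const_mul 2
    have := ((hk1.const_add 1).mul (hk2.const_add 1))
    have h := this.inv₀ (by norm_num)
    simpa using h
  have hmain := ((h3.const_mul (3 / 2 : ℝ)).mul h4)
  have hlim : 3 / 2 * (Real.sqrt π / π) * 1 = 3 / (2 * Real.sqrt π) := by
    rw [mul_one]
    rw [show π = Real.sqrt π * Real.sqrt π from (Real.mul_self_sqrt Real.pi_nonneg).symm]
    field_simp
    linear_combination (Real.sqrt (Real.sqrt π ^ 2) + Real.sqrt π) * Real.sqrt_sq (Real.sqrt_nonneg π)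
  rw [← hlim]
  refine Tendsto.congr' ?_ hmain
  filter_upwards [eventually_ge_atTop 1] with k hk
  exact (key k hk).symm
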